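/- (Relative ascending links in the simple case) Let 𝓑 be a simple expansion set over X, let b ∈ 𝓑, and let v be a vertex. Then the set {u ∈ ℰ(b) : u ≠ {b} and u ⪯ v} equals {Bas(b)} if {b} ⪯ v and {b} ≠ v, and it is empty otherwise (i.e., if {b} = v or {b} ⋠ v). -/
import Mathlib


structure SimpleExpansionSet (B : Type*) (X : Type*) where
  supp : B → Set X
  supp_nonempty : ∀ b, (supp b).Nonempty
  E : B → Set (Finset B)
  self_mem : ∀ b, ({b} : Finset B) ∈ E b
  proper_unique : ∀ b : B, ∀ u ∈ E b, ∀ w ∈ E b, u ≠ {b} → w ≠ {b} → u = w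
  proper_disjoint : ∀ b : B, ∀ v ∈ E b, v ≠ {b} →
    ∀ b₁ ∈ v, ∀ b₂ ∈ v, b₁ ≠ b₂ → Disjoint (supp b₁) (supp b₂)
  proper_supp : ∀ b : B, ∀ v ∈ E b, v ≠ {b} → (⋃ b' ∈ v, supp b') = supp b
  proper_card : ∀ b : B, ∀ v ∈ E b, v ≠ {b} → 2 ≤ v.card

namespace SimpleExpansionSet

variable {B X : Type*}

/-- A vertex: a finite subset of `𝓑` whose members have pairwise disjoint supports. -/
def IsVertex (S : SimpleExpansionSet B X) (v : Finset B) : Prop :=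
  ∀ b₁ ∈ v, ∀ b₂ ∈ v, b₁ ≠ b₂ → Disjoint (S.supp b₁) (S.supp b₂)

/-- The support of a vertex. -/
def vsupp (S : SimpleExpansionSet B X) (v : Finset B) : Set X :=
  ⋃ b ∈ v, S.supp b

/-- `|ℰ(b)| = 2`, i.e. `b` admits a proper expansion. -/
def HasExpansion (S : SimpleExpansionSet B X) (b : B) : Prop :=
  ∃ u ∈ S.E b, u ≠ {b}

/-- The contraction basin of `b`: the unique member of `ℰ(b) - {{b}}` (when it exists). -/
noncomputable def Bas (S : SimpleExpansionSet B X) (b : B) : Finset B :=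
  @dite _ (S.HasExpansion b) (Classical.propDecidable _) (fun h => h.choose) (fun _ => {b})

/-- The restriction `r_b(u) = {b' ∈ u : supp b' ⊆ supp b}`. -/
noncomputable def restrict (S : SimpleExpansionSet B X) (b : B) (u : Finset B) : Finset B :=
  @Finset.filter _ (fun b' => S.supp b' ⊆ S.supp b) (Classical.decPred _) u

/-- The partial order on `ℰ(b)`: `{b}` is below everything. -/
def Eleq (b : B) (u w : Finset B) : Prop := u = w ∨ u = {b}

/-- The cube `𝒞(v₁, v₂)`, as a set of vertices. -/
noncomputable def cube [DecidableEq B] (S : SimpleExpansionSet B X) (v₁ v₂ : Finset B) :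
    Set (Finset B) :=
  { u | ∃ w ⊆ v₂, u = (v₁ \ v₂) ∪ (v₂ \ w) ∪ w.biUnion S.Bas }

/-- One expansion step: replace `b ∈ u` by its contraction basin. -/
def Step [DecidableEq B] (S : SimpleExpansionSet B X) (u v : Finset B) : Prop :=
  ∃ b ∈ u, S.HasExpansion b ∧ v = u.erase b ∪ S.Bas b

/-- The ascending-path relation `⪯`. -/
def Prec [DecidableEq B] (S : SimpleExpansionSet B X) : Finset B → Finset B → Prop :=
  Relation.ReflTransGen (S.Step)

/-- `u` is joined to `v` by a cubical edge with basin `Bsn` (relative to `v`). -/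
def BasinOf [DecidableEq B] (S : SimpleExpansionSet B X) (v u Bsn : Finset B) : Prop :=
  (∃ b ∈ v, S.HasExpansion b ∧ u = v.erase b ∪ S.Bas b ∧ Bsn = {b}) ∨
  (∃ b ∈ u, S.HasExpansion b ∧ v = u.erase b ∪ S.Bas b ∧ Bsn = S.Bas b)

end SimpleExpansionSet

open SimpleExpansionSet

section Aux
variable {B X : Type*}

lemma bas_spec (S : SimpleExpansionSet B X) {b : B} (h : S.HasExpansion b) :
    S.Bas b ∈ S.E b ∧ S.Bas b ≠ ({b} : Finset B) := by
  unfold SimpleExpansionSet.Bas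
  rw [dif_pos h]
  obtain ⟨hm, hne⟩ := h.choose_spec
  exact ⟨hm, hne⟩

lemma bas_eq (S : SimpleExpansionSet B X) {b : B} {u : Finset B}
    (hu : u ∈ S.E b) (hne : u ≠ {b}) : u = S.Bas b := by
  have h : S.HasExpansion b := ⟨u, hu, hne⟩
  obtain ⟨hm, hn⟩ := bas_spec S h
  exact S.proper_unique b u hu _ hm hne hn

lemma step_card (S : SimpleExpansionSet B X) [DecidableEq B] {u w : Finset B}
    (h : S.Step u w) : 2 ≤ w.card := by
  obtain ⟨b', _, hexp, rfl⟩ := h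
  obtain ⟨hm, hn⟩ := bas_spec S hexp
  calc 2 ≤ (S.Bas b').card := S.proper_card b' _ hm hn
    _ ≤ _ := Finset.card_le_card Finset.subset_union_right

lemma prec_singleton (S : SimpleExpansionSet B X) [DecidableEq B] {u : Finset B} {b : B}
    (h : S.Prec u {b}) : u = {b} := by
  rcases Relation.ReflTransGen.cases_tail h with h | ⟨w, _, hs⟩
  · exact h.symm
  · have := step_card S hs
    simp at this

end Aux


/-- Relative ascending links in the simple case. -/
theorem relative_ascending_link {B X : Type*} [DecidableEq B] (S : SimpleExpansionSet B X)
    (b : B) (v : Finset B) (hv : S.IsVertex v) :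
    (S.Prec {b} v → ({b} : Finset B) ≠ v →
      {u : Finset B | u ∈ S.E b ∧ u ≠ {b} ∧ S.Prec u v} = {S.Bas b}) ∧
    ((({b} : Finset B) = v ∨ ¬ S.Prec {b} v) →
      {u : Finset B | u ∈ S.E b ∧ u ≠ {b} ∧ S.Prec u v} = ∅) := by
  constructor
  · intro hprec hne
    -- decompose first step
    rcases Relation.ReflTransGen.cases_head hprec with h | ⟨w, hs, hw⟩
    · exact absurd h hne
    · obtain ⟨b', hb', hexp, rfl⟩ := hs
      have hb'b : b' = b := Finset.mem_singleton.mp hb'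
      subst hb'b
      have herase : ({b'} : Finset B).erase b' = ∅ := by simp
      rw [herase, Finset.empty_union] at hw
      obtain ⟨hm, hn⟩ := bas_spec S hexp
      ext u
      simp only [Set.mem_setOf_eq, Set.mem_singleton_iff]
      constructor
      · rintro ⟨hu, hun, _⟩
        exact bas_eq S hu hun
      · rintro rfl
        exact ⟨hm, hn, hw⟩
  · rintro (rfl | hnp)
    · ext u
      simp only [Set.mem_setOf_eq, Set.mem_empty_iff_false, iff_false, not_and]
      intro hu hun hp
      exact hun (prec_singleton S hp)
    · ext u
      simp only [Set.mem_setOf_eq, Set.mem_empty_iff_false, iff_false, not_and]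
      intro hu hun hp
      have hexp : S.HasExpansion b := ⟨u, hu, hun⟩
      have hstep : S.Step {b} u := by
        refine ⟨b, Finset.mem_singleton_self b, hexp, ?_⟩
        rw [← bas_eq S hu hun]
        simp
      exact hnp (Relation.ReflTransGen.head hstep hp)
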